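/- In the 3-veto conformant bribery construction from 3DM: given pairwise disjoint sets X, Y, Z of size k and M ⊆ X × Y × Z in which every element appears in exactly three triples, form the election with candidates {p, p₁, p₂} ∪ X ∪ Y ∪ Z, one voter vetoing {x, y, z} (i.e., ranking x, y, z in the last three positions) for each (x,y,z) ∈ M, and k + 4 voters vetoing {p, p₁, p₂}. Then p can be made a 3-veto winner by changing the votes of at most k voters to votes already occurring in the election if and only if M contains a perfect matching of size k. -/

import Mathlib

/-- The ground set of a 3DM instance with `|X| = |Y| = |Z| = k`, the three
summands representing `X`, `Y`, `Z` (pairwise disjoint by construction). -/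
abbrev Elem (k : ℕ) := Fin k ⊕ Fin k ⊕ Fin k

/-- Candidates for the 3-veto conformant bribery construction: `none` is the
preferred candidate `p`, `some (inl a)` is the candidate for ground element
`a`, and `some (inr 0)`, `some (inr 1)` are the dummies `p₁`, `p₂`. -/
abbrev Cand7 (k : ℕ) := Option (Elem k ⊕ Fin 2)

/-- A 3-veto vote is modeled by the set of (three) candidates it vetoes,
i.e., ranks in the last three positions. -/
def tripleVeto {k : ℕ} (t : Fin k × Fin k × Fin k) : Finset (Cand7 k) :=
  {some (Sum.inl (Sum.inl t.1)), some (Sum.inl (Sum.inr (Sum.inl t.2.1))),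
    some (Sum.inl (Sum.inr (Sum.inr t.2.2)))}

/-- The votes of the election: one voter vetoing `{x, y, z}` for each
`(x, y, z) ∈ M`, and `k + 4` voters vetoing `{p, p₁, p₂}`. -/
def votes7 {k : ℕ} (M : Finset (Fin k × Fin k × Fin k)) :
    Multiset (Finset (Cand7 k)) :=
  M.val.map tripleVeto +
    Multiset.replicate (k + 4)
      ({none, some (Sum.inr 0), some (Sum.inr 1)} : Finset (Cand7 k))

/-- The number of vetoes a candidate receives (its 3-veto score is the
negation of this, so winners minimize vetoes). -/
def vetoCount {k : ℕ} (V : Multiset (Finset (Cand7 k))) (c : Cand7 k) : ℕ :=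
  @Multiset.countP _ (fun s => c ∈ s) (fun s => Finset.decidableMem c s) V

/-- `M` contains a perfect matching of size `k`. -/
def matching3 {k : ℕ} (M : Finset (Fin k × Fin k × Fin k)) : Prop :=
  ∃ M' ⊆ M, M'.card = k ∧
    (∀ i : Fin k, (M'.filter (fun t => t.1 = i)).card = 1) ∧
    (∀ i : Fin k, (M'.filter (fun t => t.2.1 = i)).card = 1) ∧
    (∀ i : Fin k, (M'.filter (fun t => t.2.2 = i)).card = 1)


open Multiset

section General
variable {α : Type*} {p q : α → Prop} [DecidablePred p] [DecidablePred q]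

lemma countP_repl (n : ℕ) (a : α) :
    countP p (replicate n a) = if p a then n else 0 := by
  induction n with
  | zero => simp
  | succ n ih =>
    rw [replicate_succ, countP_cons, ih]
    split <;> simp

lemma countP_mono_mem {s : Multiset α} (h : ∀ a ∈ s, p a → q a) :
    countP p s ≤ countP q s := by
  induction s using Multiset.induction_on with
  | empty => simp
  | cons a s ih =>
    rw [countP_cons, countP_cons]
    have h1 := h a (mem_cons_self a s)
    have h2 : countP p s ≤ countP q s := ih fun b hb => h b (mem_cons_of_mem hb)
    split <;> split <;> first | omega | (exfalso; tauto)

lemma countP_add_countP_not (s : Multiset α) :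
    countP p s + countP (fun a => ¬ p a) s = card s := by
  rw [countP_eq_card_filter, countP_eq_card_filter, ← card_add, filter_add_not]

lemma sum_eq_forall {k : ℕ} {f : Fin k → ℕ} {c : ℕ} (hge : ∀ i, c ≤ f i)
    (hsum : ∑ i, f i = k * c) : ∀ i, f i = c := by
  intro i
  have h1 := Finset.add_sum_erase Finset.univ f (Finset.mem_univ i)
  have h2 : (Finset.univ.erase i).card • c ≤ ∑ j ∈ Finset.univ.erase i, f j :=
    Finset.card_nsmul_le_sum _ _ _ fun j _ => hge j
  have h3 : (Finset.univ.erase i).card = k - 1 := by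
    rw [Finset.card_erase_of_mem (Finset.mem_univ i)]
    simp
  rw [h3, smul_eq_mul] at h2
  have h4 := hge i
  have hk : 1 ≤ k := i.pos
  have h6 : c ≤ k * c := Nat.le_mul_of_pos_left c hk
  have heq : (k - 1) * c = k * c - c := Nat.sub_one_mul k c
  omega

end General

-- experiments
open Multiset

namespace S7
variable {k : ℕ}

def pvote (k : ℕ) : Finset (Cand7 k) := {none, some (Sum.inr 0), some (Sum.inr 1)}
def xc (i : Fin k) : Cand7 k := some (Sum.inl (Sum.inl i))
def yc (i : Fin k) : Cand7 k := some (Sum.inl (Sum.inr (Sum.inl i)))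
def zc (i : Fin k) : Cand7 k := some (Sum.inl (Sum.inr (Sum.inr i)))

lemma vetoCount_eq (V : Multiset (Finset (Cand7 k))) (c : Cand7 k) :
    vetoCount V c = Multiset.countP (fun s => c ∈ s) V := rfl

lemma mem_tv_x (t : Fin k × Fin k × Fin k) (i : Fin k) :
    xc i ∈ tripleVeto t ↔ t.1 = i := by
  simp [tripleVeto, xc, eq_comm]

lemma mem_tv_y (t : Fin k × Fin k × Fin k) (i : Fin k) :
    yc i ∈ tripleVeto t ↔ t.2.1 = i := by
  simp [tripleVeto, yc, eq_comm]

lemma mem_tv_z (t : Fin k × Fin k × Fin k) (i : Fin k) :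
    zc i ∈ tripleVeto t ↔ t.2.2 = i := by
  simp [tripleVeto, zc, eq_comm]

lemma none_notmem_tv (t : Fin k × Fin k × Fin k) : none ∉ tripleVeto t := by
  simp [tripleVeto]

lemma dummy_notmem_tv (t : Fin k × Fin k × Fin k) (j : Fin 2) :
    some (Sum.inr j) ∉ tripleVeto t := by simp [tripleVeto]

lemma none_mem_pv : (none : Cand7 k) ∈ pvote k := by simp [pvote]

lemma dummy_mem_pv (j : Fin 2) : (some (Sum.inr j) : Cand7 k) ∈ pvote k := by
  fin_cases j <;> simp [pvote]

lemma xc_notmem_pv (i : Fin k) : xc i ∉ pvote k := by simp [pvote, xc]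
lemma yc_notmem_pv (i : Fin k) : yc i ∉ pvote k := by simp [pvote, yc]
lemma zc_notmem_pv (i : Fin k) : zc i ∉ pvote k := by simp [pvote, zc]

lemma tv_injective : Function.Injective (tripleVeto (k := k)) := by
  intro s t h
  have hx := (mem_tv_x t s.1).mp (h ▸ (mem_tv_x s s.1).mpr rfl)
  have hy := (mem_tv_y t s.2.1).mp (h ▸ (mem_tv_y s s.2.1).mpr rfl)
  have hz := (mem_tv_z t s.2.2).mp (h ▸ (mem_tv_z s s.2.2).mpr rfl)
  exact Prod.ext hx.symm (Prod.ext hy.symm hz.symm)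

lemma mem_votes7 {M : Finset (Fin k × Fin k × Fin k)} {v : Finset (Cand7 k)} :
    v ∈ votes7 M ↔ (∃ t ∈ M, tripleVeto t = v) ∨ v = pvote k := by
  simp only [votes7, pvote, Multiset.mem_add, Multiset.mem_map, Multiset.mem_replicate]
  constructor
  · rintro (⟨t, ht, rfl⟩ | ⟨-, rfl⟩)
    · exact Or.inl ⟨t, ht, rfl⟩
    · exact Or.inr rfl
  · rintro (⟨t, ht, rfl⟩ | rfl)
    · exact Or.inl ⟨t, ht, rfl⟩
    · exact Or.inr ⟨by omega, rfl⟩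

end S7


namespace S7
variable {k : ℕ}

lemma fcard {β : Type*} (M : Finset β) (p : β → Prop) [DecidablePred p] :
    (M.filter p).card = Multiset.countP p M.val := by
  rw [Multiset.countP_eq_card_filter]; rfl

lemma decomp {V R A : Multiset (Finset (Cand7 k))} (h : R ≤ V) (c : Cand7 k) :
    vetoCount (V - R + A) c + vetoCount R c = vetoCount V c + vetoCount A c := by
  simp only [vetoCount_eq, countP_add]
  rw [countP_sub h (fun s => c ∈ s)]
  have := countP_le_of_le (fun s => c ∈ s) h
  omega

lemma votes7_none (M : Finset (Fin k × Fin k × Fin k)) :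
    vetoCount (votes7 M) none = k + 4 := by
  rw [vetoCount_eq, votes7, countP_add, countP_map, ← countP_eq_card_filter, countP_repl,
    if_pos (by simp : (none : Cand7 k) ∈ ({none, some (Sum.inr 0), some (Sum.inr 1)} : Finset (Cand7 k))),
    countP_eq_zero.mpr (fun t _ => none_notmem_tv t), zero_add]

lemma votes7_dummy (M : Finset (Fin k × Fin k × Fin k)) (j : Fin 2) :
    vetoCount (votes7 M) (some (Sum.inr j)) = k + 4 := by
  have h := dummy_mem_pv (k := k) j
  simp only [pvote] at h
  rw [vetoCount_eq, votes7, countP_add, countP_map, ← countP_eq_card_filter, countP_repl, if_pos h,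
    countP_eq_zero.mpr (fun t _ => dummy_notmem_tv t j), zero_add]

lemma votes7_x (M : Finset (Fin k × Fin k × Fin k)) (i : Fin k) :
    vetoCount (votes7 M) (xc i) = (M.filter (fun t => t.1 = i)).card := by
  have h := xc_notmem_pv (k := k) i
  simp only [pvote] at h
  rw [vetoCount_eq, votes7, countP_add, countP_map, ← countP_eq_card_filter,
    countP_repl, if_neg h, add_zero, fcard]
  exact countP_congr rfl (fun t _ => by simp [mem_tv_x, eq_iff_iff])

lemma votes7_y (M : Finset (Fin k × Fin k × Fin k)) (i : Fin k) :
    vetoCount (votes7 M) (yc i) = (M.filter (fun t => t.2.1 = i)).card := by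
  have h := yc_notmem_pv (k := k) i
  simp only [pvote] at h
  rw [vetoCount_eq, votes7, countP_add, countP_map, ← countP_eq_card_filter,
    countP_repl, if_neg h, add_zero, fcard]
  exact countP_congr rfl (fun t _ => by simp [mem_tv_y, eq_iff_iff])

lemma votes7_z (M : Finset (Fin k × Fin k × Fin k)) (i : Fin k) :
    vetoCount (votes7 M) (zc i) = (M.filter (fun t => t.2.2 = i)).card := by
  have h := zc_notmem_pv (k := k) i
  simp only [pvote] at h
  rw [vetoCount_eq, votes7, countP_add, countP_map, ← countP_eq_card_filter,
    countP_repl, if_neg h, add_zero, fcard]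
  exact countP_congr rfl (fun t _ => by simp [mem_tv_z, eq_iff_iff])

lemma sum_veto_aux {M : Finset (Fin k × Fin k × Fin k)} (cand : Fin k → Cand7 k)
    (hpv : ∀ i, cand i ∉ pvote k)
    (htv : ∀ t : Fin k × Fin k × Fin k,
      (∑ i, if cand i ∈ tripleVeto t then 1 else 0) = 1)
    {S : Multiset (Finset (Cand7 k))} (hS : ∀ v ∈ S, v ∈ votes7 M) :
    ∑ i, vetoCount S (cand i)
      = countP (fun v => ¬ (none : Cand7 k) ∈ v) S := by
  revert hS
  refine Multiset.induction_on S (by simp [vetoCount_eq]) (fun v S ih hS => ?_)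
  have hv := hS v (mem_cons_self v S)
  have ihh := ih (fun w hw => hS w (mem_cons_of_mem hw))
  simp only [vetoCount_eq, countP_cons] at ihh ⊢
  rw [Finset.sum_add_distrib, ihh]
  rcases mem_votes7.mp hv with ⟨t, ht, rfl⟩ | rfl
  · rw [htv t, if_pos (none_notmem_tv t)]
  · rw [if_neg (not_not_intro (none_mem_pv (k := k)))]
    simp [hpv]

lemma htv_x (t : Fin k × Fin k × Fin k) :
    (∑ i, if xc i ∈ tripleVeto t then 1 else 0) = 1 := by
  simp only [mem_tv_x]
  rw [Finset.sum_ite_eq]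
  simp

lemma htv_y (t : Fin k × Fin k × Fin k) :
    (∑ i, if yc i ∈ tripleVeto t then 1 else 0) = 1 := by
  simp only [mem_tv_y]
  rw [Finset.sum_ite_eq]
  simp

lemma htv_z (t : Fin k × Fin k × Fin k) :
    (∑ i, if zc i ∈ tripleVeto t then 1 else 0) = 1 := by
  simp only [mem_tv_z]
  rw [Finset.sum_ite_eq]
  simp

end S7

namespace S7
variable {k : ℕ}

lemma replcount (n : ℕ) (c : Cand7 k) :
    vetoCount (Multiset.replicate n (pvote k)) c = if c ∈ pvote k then n else 0 := by
  rw [vetoCount_eq, countP_repl]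

lemma mapcount_none (N : Finset (Fin k × Fin k × Fin k)) :
    vetoCount (N.val.map tripleVeto) none = 0 := by
  rw [vetoCount_eq, countP_map, ← countP_eq_card_filter]
  exact countP_eq_zero.mpr (fun t _ => none_notmem_tv t)

lemma mapcount_dummy (N : Finset (Fin k × Fin k × Fin k)) (j : Fin 2) :
    vetoCount (N.val.map tripleVeto) (some (Sum.inr j)) = 0 := by
  rw [vetoCount_eq, countP_map, ← countP_eq_card_filter]
  exact countP_eq_zero.mpr (fun t _ => dummy_notmem_tv t j)

lemma mapcount_x (N : Finset (Fin k × Fin k × Fin k)) (i : Fin k) :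
    vetoCount (N.val.map tripleVeto) (xc i) = (N.filter (fun t => t.1 = i)).card := by
  rw [vetoCount_eq, countP_map, ← countP_eq_card_filter, fcard]
  exact countP_congr rfl (fun t _ => by simp [mem_tv_x, eq_iff_iff])

lemma mapcount_y (N : Finset (Fin k × Fin k × Fin k)) (i : Fin k) :
    vetoCount (N.val.map tripleVeto) (yc i) = (N.filter (fun t => t.2.1 = i)).card := by
  rw [vetoCount_eq, countP_map, ← countP_eq_card_filter, fcard]
  exact countP_congr rfl (fun t _ => by simp [mem_tv_y, eq_iff_iff])

lemma mapcount_z (N : Finset (Fin k × Fin k × Fin k)) (i : Fin k) :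
    vetoCount (N.val.map tripleVeto) (zc i) = (N.filter (fun t => t.2.2 = i)).card := by
  rw [vetoCount_eq, countP_map, ← countP_eq_card_filter, fcard]
  exact countP_congr rfl (fun t _ => by simp [mem_tv_z, eq_iff_iff])

end S7


open S7

/-- In the 3-veto conformant bribery construction from 3DM
(with `k > 0` and every ground element appearing in exactly three triples),
`p = none` can be made a 3-veto winner by changing the votes of at most `k`
voters to votes already occurring in the election iff `M` contains a perfect
matching of size `k`. -/
theorem stmt_7 (k : ℕ) (hk : 0 < k) (M : Finset (Fin k × Fin k × Fin k))
    (h1 : ∀ i : Fin k, (M.filter (fun t => t.1 = i)).card = 3)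
    (h2 : ∀ i : Fin k, (M.filter (fun t => t.2.1 = i)).card = 3)
    (h3 : ∀ i : Fin k, (M.filter (fun t => t.2.2 = i)).card = 3) :
    (∃ R ≤ votes7 M, Multiset.card R ≤ k ∧
        ∃ A : Multiset (Finset (Cand7 k)),
          Multiset.card A = Multiset.card R ∧ (∀ v ∈ A, v ∈ votes7 M) ∧
          ∀ c : Cand7 k,
            vetoCount (votes7 M - R + A) none ≤ vetoCount (votes7 M - R + A) c)
      ↔ matching3 M := by
  constructor
  · rintro ⟨R, hR, hRk, A, hAR, hAmem, hwin⟩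
    have hRmem : ∀ v ∈ R, v ∈ votes7 M := fun v hv => Multiset.mem_of_le hR hv
    set W := votes7 M - R + A with hWdef
    set n := vetoCount W none with hndef
    -- basic counting facts
    have f1 : n + vetoCount R none = (k + 4) + vetoCount A none := by
      have := decomp (A := A) hR none
      rw [votes7_none] at this
      exact this
    have f2 : vetoCount R none + Multiset.countP (fun v => ¬ (none : Cand7 k) ∈ v) R
        = Multiset.card R := by
      rw [vetoCount_eq]; exact countP_add_countP_not R
    have f3 : vetoCount A none + Multiset.countP (fun v => ¬ (none : Cand7 k) ∈ v) A
        = Multiset.card A := by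
      rw [vetoCount_eq]; exact countP_add_countP_not A
    have f7 : vetoCount R none ≤ Multiset.card R := by
      rw [vetoCount_eq]; exact Multiset.countP_le_card _ R
    have sumR : ∑ i, vetoCount R (xc i)
        = Multiset.countP (fun v => ¬ (none : Cand7 k) ∈ v) R :=
      sum_veto_aux xc xc_notmem_pv htv_x hRmem
    have sumAx : ∑ i, vetoCount A (xc i)
        = Multiset.countP (fun v => ¬ (none : Cand7 k) ∈ v) A :=
      sum_veto_aux xc xc_notmem_pv htv_x hAmem
    have sumAy : ∑ i, vetoCount A (yc i)
        = Multiset.countP (fun v => ¬ (none : Cand7 k) ∈ v) A :=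
      sum_veto_aux yc yc_notmem_pv htv_y hAmem
    have sumAz : ∑ i, vetoCount A (zc i)
        = Multiset.countP (fun v => ¬ (none : Cand7 k) ∈ v) A :=
      sum_veto_aux zc zc_notmem_pv htv_z hAmem
    have key : ∀ i, vetoCount W (xc i) + vetoCount R (xc i) = 3 + vetoCount A (xc i) := by
      intro i
      have := decomp (A := A) hR (xc i)
      rw [votes7_x, h1 i] at this
      exact this
    have f6 : (∑ i, vetoCount W (xc i)) + (∑ i, vetoCount R (xc i))
        = 3 * k + ∑ i, vetoCount A (xc i) := by
      rw [← Finset.sum_add_distrib, Finset.sum_congr rfl (fun i _ => key i),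
        Finset.sum_add_distrib, Finset.sum_const, Finset.card_univ, Fintype.card_fin,
        smul_eq_mul, mul_comm]
    have hge : ∀ i, n ≤ vetoCount W (xc i) := fun i => hwin (xc i)
    have f5 : k * n ≤ ∑ i, vetoCount W (xc i) := by
      have := Finset.card_nsmul_le_sum Finset.univ (fun i => vetoCount W (xc i)) n
        (fun i _ => hge i)
      simpa [Finset.card_univ, Fintype.card_fin, smul_eq_mul] using this
    have h4n : 4 ≤ n := by omega
    have hkn : k * 4 ≤ k * n := Nat.mul_le_mul_left k h4n
    obtain ⟨K, hK⟩ : ∃ K, k * n = K := ⟨_, rfl⟩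
    rw [hK] at f5 hkn
    have htR : Multiset.countP (fun v => ¬ (none : Cand7 k) ∈ v) R = 0 := by omega
    have hr : Multiset.card R = k := by omega
    have haN : vetoCount A none = 0 := by omega
    have htA : Multiset.countP (fun v => ¬ (none : Cand7 k) ∈ v) A = k := by omega
    have hn4 : n = 4 := by omega
    have hSw : ∑ i, vetoCount W (xc i) = k * 4 := by omega
    have hWx : ∀ i, vetoCount W (xc i) = 4 :=
      sum_eq_forall (fun i => hn4 ▸ hge i) hSw
    have hRtrip : ∀ v ∈ R, (none : Cand7 k) ∈ v := by
      intro v hv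
      by_contra hnv
      have := Multiset.countP_eq_zero.mp htR v hv
      exact this hnv
    have hRzero : ∀ c : Cand7 k, c ∉ pvote k → vetoCount R c = 0 := by
      intro c hc
      rw [vetoCount_eq]
      refine Multiset.countP_eq_zero.mpr (fun v hv => ?_)
      rcases mem_votes7.mp (hRmem v hv) with ⟨t, _, rfl⟩ | rfl
      · exact (none_notmem_tv t (hRtrip _ hv)).elim
      · exact hc
    have hAtrip : ∀ v ∈ A, (none : Cand7 k) ∉ v := by
      intro v hv
      have : Multiset.countP (fun s => (none : Cand7 k) ∈ s) A = 0 := haN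
      exact Multiset.countP_eq_zero.mp this v hv
    have hAform : ∀ v ∈ A, ∃ t ∈ M, tripleVeto t = v := by
      intro v hv
      rcases mem_votes7.mp (hAmem v hv) with h | rfl
      · exact h
      · exact absurd none_mem_pv (hAtrip _ hv)
    have hAx : ∀ i, vetoCount A (xc i) = 1 := by
      intro i
      have := key i
      rw [hWx i, hRzero (xc i) (xc_notmem_pv i)] at this
      omega
    have hgeAy : ∀ i, 1 ≤ vetoCount A (yc i) := by
      intro i
      have hd : vetoCount W (yc i) + vetoCount R (yc i)
          = vetoCount (votes7 M) (yc i) + vetoCount A (yc i) := decomp (A := A) hR (yc i)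
      rw [votes7_y, h2 i, hRzero (yc i) (yc_notmem_pv i)] at hd
      have hw := hwin (yc i)
      omega
    have hsumAy : ∑ i, vetoCount A (yc i) = k * 1 := by rw [sumAy]; omega
    have hAy : ∀ i, vetoCount A (yc i) = 1 := sum_eq_forall hgeAy hsumAy
    have hgeAz : ∀ i, 1 ≤ vetoCount A (zc i) := by
      intro i
      have hd : vetoCount W (zc i) + vetoCount R (zc i)
          = vetoCount (votes7 M) (zc i) + vetoCount A (zc i) := decomp (A := A) hR (zc i)
      rw [votes7_z, h3 i, hRzero (zc i) (zc_notmem_pv i)] at hd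
      have hw := hwin (zc i)
      omega
    have hsumAz : ∑ i, vetoCount A (zc i) = k * 1 := by rw [sumAz]; omega
    have hAz : ∀ i, vetoCount A (zc i) = 1 := sum_eq_forall hgeAz hsumAz
    -- extract the matching
    haveI : Nonempty (Fin k × Fin k × Fin k) := ⟨⟨⟨0, hk⟩, ⟨0, hk⟩, ⟨0, hk⟩⟩⟩
    set g : Finset (Cand7 k) → Fin k × Fin k × Fin k := Function.invFun tripleVeto with hgdef
    have hg : ∀ t, g (tripleVeto t) = t := Function.leftInverse_invFun tv_injective
    set T := A.map g with hTdef
    have hTcard : Multiset.card T = k := by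
      rw [hTdef, Multiset.card_map, hAR, hr]
    have hT1 : ∀ i, Multiset.countP (fun t => t.1 = i) T = 1 := by
      intro i
      rw [hTdef, Multiset.countP_map, ← Multiset.countP_eq_card_filter]
      have : Multiset.countP (fun v => (g v).1 = i) A = vetoCount A (xc i) := by
        rw [vetoCount_eq]
        refine Multiset.countP_congr rfl (fun v hv => ?_)
        obtain ⟨t, _, rfl⟩ := hAform v hv
        rw [hg t]
        simp [mem_tv_x, eq_iff_iff]
      rw [this, hAx i]
    have hT2 : ∀ i, Multiset.countP (fun t => t.2.1 = i) T = 1 := by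
      intro i
      rw [hTdef, Multiset.countP_map, ← Multiset.countP_eq_card_filter]
      have : Multiset.countP (fun v => (g v).2.1 = i) A = vetoCount A (yc i) := by
        rw [vetoCount_eq]
        refine Multiset.countP_congr rfl (fun v hv => ?_)
        obtain ⟨t, _, rfl⟩ := hAform v hv
        rw [hg t]
        simp [mem_tv_y, eq_iff_iff]
      rw [this, hAy i]
    have hT3 : ∀ i, Multiset.countP (fun t => t.2.2 = i) T = 1 := by
      intro i
      rw [hTdef, Multiset.countP_map, ← Multiset.countP_eq_card_filter]
      have : Multiset.countP (fun v => (g v).2.2 = i) A = vetoCount A (zc i) := by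
        rw [vetoCount_eq]
        refine Multiset.countP_congr rfl (fun v hv => ?_)
        obtain ⟨t, _, rfl⟩ := hAform v hv
        rw [hg t]
        simp [mem_tv_z, eq_iff_iff]
      rw [this, hAz i]
    have hTM : ∀ t ∈ T, t ∈ M := by
      intro t ht
      obtain ⟨v, hv, rfl⟩ := Multiset.mem_map.mp ht
      obtain ⟨s, hs, rfl⟩ := hAform v hv
      rw [hg s]
      exact hs
    have hnodup : T.Nodup := by
      rw [Multiset.nodup_iff_count_le_one]
      intro t
      have hle : Multiset.count t T ≤ Multiset.countP (fun s => s.1 = t.1) T := by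
        refine countP_mono_mem (fun x _ hxt => ?_)
        rw [← hxt]
      rw [hT1 t.1] at hle
      exact hle
    refine ⟨⟨T, hnodup⟩, fun t ht => hTM t ht, hTcard, ?_, ?_, ?_⟩
    · intro i; rw [fcard]; exact hT1 i
    · intro i; rw [fcard]; exact hT2 i
    · intro i; rw [fcard]; exact hT3 i
  · rintro ⟨M', hsub, hcard, hx, hy, hz⟩
    have hle : Multiset.replicate k (pvote k) ≤ votes7 M := by
      rw [votes7]
      exact le_trans ((Multiset.replicate_le_replicate _).mpr (by omega))
        (Multiset.le_add_left _ _)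
    refine ⟨Multiset.replicate k (pvote k), hle, by simp, M'.val.map tripleVeto,
      by simp [hcard], ?_, ?_⟩
    · intro v hv
      obtain ⟨t, ht, rfl⟩ := Multiset.mem_map.mp hv
      exact mem_votes7.mpr (Or.inl ⟨t, hsub ht, rfl⟩)
    · have hW : ∀ c : Cand7 k,
          vetoCount (votes7 M - Multiset.replicate k (pvote k) + M'.val.map tripleVeto) c
            = 4 := by
        intro c
        have hd := decomp (A := M'.val.map tripleVeto) hle c
        match c with
        | none =>
          rw [votes7_none, replcount, if_pos none_mem_pv, mapcount_none] at hd
          omega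
        | some (Sum.inr j) =>
          rw [votes7_dummy, replcount, if_pos (dummy_mem_pv j), mapcount_dummy] at hd
          omega
        | some (Sum.inl (Sum.inl i)) =>
          have hd' : vetoCount (votes7 M - Multiset.replicate k (pvote k)
              + M'.val.map tripleVeto) (xc i) + vetoCount (Multiset.replicate k (pvote k)) (xc i)
              = vetoCount (votes7 M) (xc i) + vetoCount (M'.val.map tripleVeto) (xc i) := hd
          rw [votes7_x, h1 i, replcount, if_neg (xc_notmem_pv i),
            mapcount_x, hx i] at hd'
          exact (by omega : vetoCount (votes7 M - Multiset.replicate k (pvote k)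
              + M'.val.map tripleVeto) (xc i) = 4)
        | some (Sum.inl (Sum.inr (Sum.inl i))) =>
          have hd' : vetoCount (votes7 M - Multiset.replicate k (pvote k)
              + M'.val.map tripleVeto) (yc i) + vetoCount (Multiset.replicate k (pvote k)) (yc i)
              = vetoCount (votes7 M) (yc i) + vetoCount (M'.val.map tripleVeto) (yc i) := hd
          rw [votes7_y, h2 i, replcount, if_neg (yc_notmem_pv i),
            mapcount_y, hy i] at hd'
          exact (by omega : vetoCount (votes7 M - Multiset.replicate k (pvote k)
              + M'.val.map tripleVeto) (yc i) = 4)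
        | some (Sum.inl (Sum.inr (Sum.inr i))) =>
          have hd' : vetoCount (votes7 M - Multiset.replicate k (pvote k)
              + M'.val.map tripleVeto) (zc i) + vetoCount (Multiset.replicate k (pvote k)) (zc i)
              = vetoCount (votes7 M) (zc i) + vetoCount (M'.val.map tripleVeto) (zc i) := hd
          rw [votes7_z, h3 i, replcount, if_neg (zc_notmem_pv i),
            mapcount_z, hz i] at hd'
          exact (by omega : vetoCount (votes7 M - Multiset.replicate k (pvote k)
              + M'.val.map tripleVeto) (zc i) = 4)
      intro c
      rw [hW none, hW c]
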